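/- Let X be a Hilbert space and A: X ⇉ X be a monotone set-valued operator. Then A is maximally monotone if and only if Id + A is surjective, i.e., ran(Id + A) = X (Minty's theorem). -/

import Mathlib

open RealInnerProductSpace Filter

/-- A set-valued operator on a Hilbert space is monotone. -/
def MonotoneOp {X : Type*} [NormedAddCommGroup X] [InnerProductSpace ℝ X]
    (A : X → Set X) : Prop :=
  (∃ x y, y ∈ A x) ∧
    ∀ x₁ x₂ y₁ y₂ : X, y₁ ∈ A x₁ → y₂ ∈ A x₂ → (0:ℝ) ≤ inner ℝ (y₁ - y₂) (x₁ - x₂)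

/-- A set-valued operator on a Hilbert space is maximally monotone. -/
def MaximallyMonotoneOp {X : Type*} [NormedAddCommGroup X] [InnerProductSpace ℝ X]
    (A : X → Set X) : Prop :=
  MonotoneOp A ∧
    ∀ x y : X, (∀ x' y' : X, y' ∈ A x' → (0:ℝ) ≤ inner ℝ (y - y') (x - x')) → y ∈ A x

theorem minty_zero {X : Type*} [NormedAddCommGroup X] [InnerProductSpace ℝ X]
    [CompleteSpace X] (A : X → Set X) (hA : MaximallyMonotoneOp A) : ∃ x : X, -x ∈ A x := by
  obtain ⟨⟨⟨a₀, b₀, hab₀⟩, hmono⟩, hmax⟩ := hA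
  -- `P x y c` says that the Fitzpatrick function of `A` at `(x,y)` is at most `c`.
  set P : X → X → ℝ → Prop :=
    fun x y c => ∀ a b, b ∈ A a → ⟪x, b⟫ + ⟪a, y⟫ - ⟪a, b⟫ ≤ c with hPdef
  set q : X → X → ℝ := fun x y => ‖x‖^2/2 + ‖y‖^2/2 with hqdef
  -- On the graph, the Fitzpatrick function is bounded by the pairing.
  have hgraph : ∀ a b, b ∈ A a → P a b ⟪a, b⟫ := by
    intro a b hab a' b' h'
    have h0 := hmono a a' b b' hab h'
    simp only [inner_sub_left, inner_sub_right] at h0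
    linarith [real_inner_comm a b', real_inner_comm a' b, real_inner_comm a' b',
      real_inner_comm a b]
  -- The Fitzpatrick function dominates the pairing (uses maximality).
  have hlow : ∀ x y c, P x y c → ⟪x, y⟫ ≤ c := by
    intro x y c hc
    by_cases hxy : y ∈ A x
    · have := hc x y hxy; linarith
    · by_contra hlt
      push_neg at hlt
      refine hxy (hmax x y ?_)
      intro a b hb
      have h1 := hc a b hb
      simp only [inner_sub_left, inner_sub_right]
      have e1 := real_inner_comm y x
      have e2 := real_inner_comm y a
      have e3 := real_inner_comm b x
      have e4 := real_inner_comm b a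
      linarith
  -- The objective values
  set V : Set ℝ := {r | ∃ x y c, P x y c ∧ r = c + q x y} with hVdef
  have hVne : V.Nonempty := ⟨⟪a₀, b₀⟫ + q a₀ b₀, a₀, b₀, ⟪a₀, b₀⟫, hgraph a₀ b₀ hab₀, rfl⟩
  have hVlb : ∀ r ∈ V, (0:ℝ) ≤ r := by
    rintro r ⟨x, y, c, hc, rfl⟩
    have h1 := hlow x y c hc
    have h2 := norm_add_sq_real x y
    have h3 := sq_nonneg ‖x + y‖
    simp only [hqdef]
    linarith
  have hbdd : BddBelow V := ⟨0, fun r hr => hVlb r hr⟩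
  set m : ℝ := sInf V with hmdef
  have hm_le : ∀ x y c, P x y c → m ≤ c + q x y := fun x y c h =>
    csInf_le hbdd ⟨x, y, c, h, rfl⟩
  -- minimizing sequence
  have happrox : ∀ n : ℕ, ∃ x y c, P x y c ∧ c + q x y < m + 1/(n+1) := by
    intro n
    obtain ⟨r, hrV, hrlt⟩ := Real.lt_sInf_add_pos hVne
      (show (0:ℝ) < 1/(n+1) by positivity)
    obtain ⟨x, y, c, hc, rfl⟩ := hrV
    exact ⟨x, y, c, hc, hrlt⟩
  choose u v c hPn hln using happrox
  have hmn : ∀ n, m ≤ c n + q (u n) (v n) := fun n => hm_le _ _ _ (hPn n)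
  -- midpoint norm identity
  have hmidnorm : ∀ p r : X, ‖(1/2 : ℝ) • (p + r)‖^2 = ‖p‖^2/2 + ‖r‖^2/2 - ‖p - r‖^2/4 := by
    intro p r
    have h1 : ‖(1/2 : ℝ) • (p + r)‖^2 = (1/4) * ‖p + r‖^2 := by
      rw [norm_smul]
      simp [abs_of_nonneg]
      ring
    have h2 := norm_add_sq_real p r
    have h3 := norm_sub_sq_real p r
    rw [h1]; linarith
  -- Cauchy estimate
  have hdist : ∀ n k : ℕ, ‖u n - u k‖^2 + ‖v n - v k‖^2 ≤ 4 * (1/(n+1) + 1/(k+1)) := by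
    intro n k
    set xm : X := (1/2 : ℝ) • (u n + u k)
    set ym : X := (1/2 : ℝ) • (v n + v k)
    have hPm : P xm ym ((c n + c k)/2) := by
      intro a b hab
      have h1 := hPn n a b hab
      have h2 := hPn k a b hab
      simp only [xm, ym, real_inner_smul_left, real_inner_smul_right, inner_add_left,
        inner_add_right]
      linarith
    have h3 := hm_le xm ym _ hPm
    have h4 : q xm ym = (q (u n) (v n) + q (u k) (v k))/2
        - (‖u n - u k‖^2 + ‖v n - v k‖^2)/8 := by
      simp only [hqdef, xm, ym, hmidnorm]
      ring
    have h5 := hln n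
    have h6 := hln k
    rw [h4] at h3
    linarith
  -- the sequences are Cauchy
  have hcau : ∀ w : ℕ → X, (∀ n k : ℕ, ‖w n - w k‖^2 ≤ 4 * (1/(n+1) + 1/(k+1))) →
      ∃ l : X, Tendsto w atTop (nhds l) := by
    intro w hw
    have hb : Tendsto (fun N : ℕ => Real.sqrt (8/(N+1))) atTop (nhds 0) := by
      have h0 : Tendsto (fun N : ℕ => 8/((N:ℝ)+1)) atTop (nhds 0) := by
        have := tendsto_one_div_add_atTop_nhds_zero_nat.const_mul (8:ℝ)
        simpa [mul_one_div, div_eq_mul_inv] using this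
      have h1 := (Real.continuous_sqrt.tendsto 0).comp h0
      simp only [Function.comp_def, Real.sqrt_zero] at h1
      exact h1
    refine cauchySeq_tendsto_of_complete (cauchySeq_of_le_tendsto_0 _ (fun n k N hn hk => ?_) hb)
    rw [dist_eq_norm]
    refine (Real.le_sqrt (norm_nonneg _) (by positivity)).2 ?_
    have h1 : (1:ℝ)/(n+1) ≤ 1/(N+1) := by
      apply one_div_le_one_div_of_le (by positivity)
      exact_mod_cast by omega
    have h2 : (1:ℝ)/(k+1) ≤ 1/(N+1) := by
      apply one_div_le_one_div_of_le (by positivity)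
      exact_mod_cast by omega
    have := hw n k
    have : ‖w n - w k‖^2 ≤ 8/(N+1) := by
      have h8 : (8:ℝ)/(N+1) = 4 * (1/(N+1) + 1/(N+1)) := by ring
      rw [h8]
      nlinarith
    exact this
  obtain ⟨xb, hxb⟩ := hcau u (fun n k => by have := hdist n k; nlinarith [sq_nonneg ‖v n - v k‖])
  obtain ⟨yb, hyb⟩ := hcau v (fun n k => by have := hdist n k; nlinarith [sq_nonneg ‖u n - u k‖])
  -- value convergence
  have hqten : Tendsto (fun n => q (u n) (v n)) atTop (nhds (q xb yb)) := by
    simp only [hqdef]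
    exact (((hxb.norm.pow 2).div_const 2).add ((hyb.norm.pow 2).div_const 2))
  have hvalten : Tendsto (fun n => c n + q (u n) (v n)) atTop (nhds m) := by
    refine tendsto_of_tendsto_of_tendsto_of_le_of_le tendsto_const_nhds ?_ hmn
      (fun n => (hln n).le)
    have h0 : Tendsto (fun n : ℕ => m + 1/((n:ℝ)+1)) atTop (nhds (m + 0)) :=
      tendsto_const_nhds.add tendsto_one_div_add_atTop_nhds_zero_nat
    simpa using h0
  have hcten : Tendsto c atTop (nhds (m - q xb yb)) := by
    have := hvalten.sub hqten
    simpa using this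
  -- the limit satisfies P with value m - q xb yb
  have hPbar : P xb yb (m - q xb yb) := by
    intro a b hab
    have hphi : Tendsto (fun n => (⟪u n, b⟫ + ⟪a, v n⟫ - ⟪a, b⟫ : ℝ)) atTop
        (nhds (⟪xb, b⟫ + ⟪a, yb⟫ - ⟪a, b⟫)) :=
      ((hxb.inner tendsto_const_nhds).add (tendsto_const_nhds.inner hyb)).sub tendsto_const_nhds
    exact le_of_tendsto_of_tendsto hphi hcten
      (Eventually.of_forall (fun n => hPn n a b hab))
  set cb : ℝ := m - q xb yb with hcbdef
  have hlowbar : ⟪xb, yb⟫ ≤ cb := hlow xb yb cb hPbar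
  -- subgradient inequality
  have hstar : ∀ a b, b ∈ A a →
      0 ≤ ⟪a, b⟫ - cb + ⟪xb, a - xb⟫ + ⟪yb, b - yb⟫ := by
    intro a b hab
    set R : ℝ := ⟪a, b⟫ - cb + ⟪xb, a - xb⟫ + ⟪yb, b - yb⟫ with hRdef
    set K : ℝ := ‖a - xb‖^2 + ‖b - yb‖^2 with hKdef
    have hK : 0 ≤ K := by positivity
    have key : ∀ t : ℝ, 0 < t → t ≤ 1 → 0 ≤ t * R + t^2/2 * K := by
      intro t ht0 ht1
      have hPt : P (xb + t • (a - xb)) (yb + t • (b - yb)) ((1-t) * cb + t * ⟪a, b⟫) := by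
        intro a' b' h'
        have h1 := hPbar a' b' h'
        have h2 := hgraph a b hab a' b' h'
        simp only [inner_add_left, inner_add_right, real_inner_smul_left, real_inner_smul_right,
          inner_sub_left, inner_sub_right]
        nlinarith [mul_le_mul_of_nonneg_left h1 (by linarith : (0:ℝ) ≤ 1 - t),
          mul_le_mul_of_nonneg_left h2 ht0.le]
      have h3 := hm_le _ _ _ hPt
      have h4 : q (xb + t • (a - xb)) (yb + t • (b - yb))
          = q xb yb + t * (⟪xb, a - xb⟫ + ⟪yb, b - yb⟫) + t^2/2 * K := by
        simp only [hqdef, hKdef]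
        rw [norm_add_sq_real, norm_add_sq_real, real_inner_smul_right, real_inner_smul_right,
          norm_smul, norm_smul]
        simp only [Real.norm_eq_abs]
        rw [mul_pow, mul_pow, sq_abs]
        ring
      rw [h4] at h3
      have hcbq : cb + q xb yb = m := by simp [hcbdef]
      rw [hRdef]
      have hexp : (1 - t) * cb + t * ⟪a, b⟫ + (q xb yb + t * (⟪xb, a - xb⟫ + ⟪yb, b - yb⟫) + t^2/2 * K)
          = (cb + q xb yb) + (t * (⟪a, b⟫ - cb + ⟪xb, a - xb⟫ + ⟪yb, b - yb⟫) + t^2/2 * K) := by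
        ring
      rw [hexp, hcbq] at h3
      linarith
    by_contra hcon
    push_neg at hcon
    rcases eq_or_lt_of_le hK with hK0 | hKpos
    · have := key 1 one_pos le_rfl
      rw [← hK0] at this
      linarith
    · set t : ℝ := min 1 (-R / K) with htdef
      have ht0 : 0 < t := lt_min one_pos (div_pos (neg_pos.mpr hcon) hKpos)
      have h1 := key t ht0 (min_le_left _ _)
      have h2 : t * K ≤ (-R / K) * K :=
        mul_le_mul_of_nonneg_right (min_le_right _ _) hK
      rw [div_mul_cancel₀ _ (ne_of_gt hKpos)] at h2
      have h6 : t^2/2 * K ≤ t/2 * (-R) := by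
        have h7 := mul_le_mul_of_nonneg_left h2 (by positivity : (0:ℝ) ≤ t/2)
        nlinarith
      nlinarith [mul_pos ht0 (neg_pos.mpr hcon)]
  -- conclude (-yb, -xb) is in the graph
  have hmem : -xb ∈ A (-yb) := by
    apply hmax
    intro a b hab
    have h1 := hstar a b hab
    simp only [inner_sub_left, inner_sub_right, inner_neg_left, inner_neg_right,
      real_inner_self_eq_norm_sq] at h1 ⊢
    have e1 := real_inner_comm xb a
    have e2 := real_inner_comm yb b
    have e3 := real_inner_comm xb b
    have e4 := real_inner_comm yb a
    have e5 := real_inner_comm a b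
    have e6 := real_inner_comm xb yb
    have h7 := norm_add_sq_real xb yb
    have h8 := sq_nonneg ‖xb + yb‖
    linarith
  -- plug it back into the subgradient inequality
  have hfin := hstar (-yb) (-xb) hmem
  simp only [inner_sub_left, inner_sub_right, inner_neg_left, inner_neg_right,
    real_inner_self_eq_norm_sq] at hfin
  have e6 := real_inner_comm xb yb
  have h7 := norm_add_sq_real xb yb
  have h8 := sq_nonneg ‖xb + yb‖
  have hzero : ‖xb + yb‖^2 ≤ 0 := by linarith
  have hxy : xb + yb = 0 := by
    have : ‖xb + yb‖ = 0 := by nlinarith [norm_nonneg (xb + yb)]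
    simpa [norm_eq_zero] using this
  have hyx : -yb = xb := by
    have h9 : yb = -xb := eq_neg_of_add_eq_zero_right hxy
    rw [h9, neg_neg]
  rw [hyx] at hmem
  exact ⟨xb, hmem⟩

/-- Minty's theorem: a monotone operator `A` on a Hilbert space is maximally monotone
if and only if `Id + A` is surjective. -/
theorem minty {X : Type*} [NormedAddCommGroup X] [InnerProductSpace ℝ X]
    [CompleteSpace X] (A : X → Set X) (hmono : MonotoneOp A) :
    MaximallyMonotoneOp A ↔ ∀ z : X, ∃ x y : X, y ∈ A x ∧ x + y = z := by
  constructor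
  · intro hmax z
    set B : X → Set X := fun x => {w : X | w + z ∈ A x} with hBdef
    have hBmax : MaximallyMonotoneOp B := by
      obtain ⟨⟨⟨a₀, b₀, hab₀⟩, hm⟩, hM⟩ := hmax
      refine ⟨⟨⟨a₀, b₀ - z, by simp [hBdef, hab₀]⟩, ?_⟩, ?_⟩
      · intro x₁ x₂ y₁ y₂ h₁ h₂
        have := hm x₁ x₂ (y₁ + z) (y₂ + z) h₁ h₂
        simpa using this
      · intro x y hy
        have : y + z ∈ A x := by
          apply hM
          intro x' y' hy'
          have := hy x' (y' - z) (by simpa [hBdef] using hy')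
          simpa [sub_sub_eq_add_sub, add_sub_cancel] using this
        exact this
    obtain ⟨x, hx⟩ := minty_zero B hBmax
    refine ⟨x, z - x, ?_, by abel⟩
    have : -x + z ∈ A x := hx
    simpa [neg_add_eq_sub] using this
  · intro hsurj
    refine ⟨hmono, ?_⟩
    intro x y hy
    obtain ⟨u, w, hw, huw⟩ := hsurj (x + y)
    have h1 := hy u w hw
    have h2 : y - w = u - x := by
      rw [sub_eq_sub_iff_add_eq_add, add_comm y x, ← huw, add_comm]
    rw [h2] at h1
    have h3 : (0:ℝ) ≤ -‖x - u‖^2 := by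
      have he : (inner ℝ (u - x) (x - u) : ℝ) = -‖x - u‖^2 := by
        rw [show u - x = -(x-u) by abel, inner_neg_left, real_inner_self_eq_norm_sq]
      rw [he] at h1; exact h1
    have h4 : x = u := by
      have h5 : ‖x - u‖ = 0 := by nlinarith [norm_nonneg (x - u), sq_nonneg ‖x - u‖]
      exact sub_eq_zero.mp (norm_eq_zero.mp h5)
    subst h4
    have h6 : w = y := add_left_cancel huw.symm |>.symm
    rw [← h6]
    exact hw
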